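/- Let H be a hypergraph with an ordering v_1,…,v_n of its vertices, let i ∈ {0,…,n−1}, let T* be a minimal transversal of H_i, and let X ⊆ V_{i+1} \ T* be such that T* ∪ X is a minimal transversal of H_{i+1}. Then every x ∈ X has a private edge E with respect to T* ∪ X in H_{i+1} such that v_{i+1} ∈ E; in particular every x ∈ X has a private edge belonging to inc_{i+1}(v_{i+1}). -/

import Mathlib

/-- `T` is a transversal of the induced hypergraph `H[S]`, where the ambient
hypergraph has edge family `E`: `T ⊆ S` and `T` meets every edge of `E` that is
contained in `S`. -/
def IsTransversal {α : Type*} [DecidableEq α]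
    (E : Finset (Finset α)) (S T : Finset α) : Prop :=
  T ⊆ S ∧ ∀ e ∈ E, e ⊆ S → (e ∩ T).Nonempty

/-- `T` is a minimal transversal of `H[S]`: it is a transversal and no proper
subset of it is a transversal. -/
def IsMinTransversal {α : Type*} [DecidableEq α]
    (E : Finset (Finset α)) (S T : Finset α) : Prop :=
  IsTransversal E S T ∧ ∀ T' ⊂ T, ¬ IsTransversal E S T'

/-- Let `H` be a hypergraph with an ordering `v 0, …, v (n-1)` of its vertices,
let `i ∈ {0,…,n-1}`, let `T*` be a minimal transversal of `H_i = H[{v 0,…,v (i-1)}]`,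
and let `X ⊆ V_{i+1} \ T*` (with `V_{i+1} = {v 0,…,v i}`) be such that `T* ∪ X` is a
minimal transversal of `H_{i+1} = H[V_{i+1}]`. Then every `x ∈ X` has a private
edge `e` with respect to `T* ∪ X` in `H_{i+1}` (an edge `e` of `H_{i+1}` with
`e ∩ (T* ∪ X) = {x}`) that moreover contains `v i`; in particular every `x ∈ X`
has a private edge belonging to `inc_{i+1}(v_{i+1})`. -/
theorem private_edge_in_incidence_of_new_vertex
    {α : Type*} [DecidableEq α] {n : ℕ} (V : Finset α) (E : Finset (Finset α))
    (hE : ∀ e ∈ E, e ⊆ V)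
    (v : Fin n → α) (hinj : Function.Injective v) (hV : V = Finset.univ.image v)
    (i : Fin n) (Tstar X : Finset α)
    (hT : IsMinTransversal E ((Finset.Iio i).image v) Tstar)
    (hX : X ⊆ (Finset.Iic i).image v \ Tstar)
    (hTX : IsMinTransversal E ((Finset.Iic i).image v) (Tstar ∪ X)) :
    ∀ x ∈ X, ∃ e ∈ E,
      e ⊆ (Finset.Iic i).image v ∧ v i ∈ e ∧ e ∩ (Tstar ∪ X) = {x} := by
  intro x hxX
  have hxTX : x ∈ Tstar ∪ X := Finset.mem_union_right _ hxX
  have hxT : x ∉ Tstar := (Finset.mem_sdiff.1 (hX hxX)).2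
  -- subset of Iic image
  have hsub : Tstar ∪ X ⊆ (Finset.Iic i).image v := by
    apply Finset.union_subset
    · exact hT.1.1.trans (Finset.image_subset_image (by
        intro j hj; exact Finset.mem_Iic.2 (le_of_lt (Finset.mem_Iio.1 hj))))
    · intro y hy; exact (Finset.mem_sdiff.1 (hX hy)).1
  have herase : (Tstar ∪ X).erase x ⊂ Tstar ∪ X := Finset.erase_ssubset hxTX
  have hnt := hTX.2 _ herase
  -- extract a bad edge
  have : ∃ e ∈ E, e ⊆ (Finset.Iic i).image v ∧ e ∩ (Tstar ∪ X).erase x = ∅ := by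
    by_contra h
    push_neg at h
    exact hnt ⟨(Finset.erase_subset _ _).trans hsub, fun e he hes => by
      rcases Finset.eq_empty_or_nonempty (e ∩ (Tstar ∪ X).erase x) with h0 | h0
      · exact absurd h0 (Finset.nonempty_iff_ne_empty.1 (h e he hes))
      · exact h0⟩
  obtain ⟨e, heE, heS, hemp⟩ := this
  refine ⟨e, heE, heS, ?_, ?_⟩
  · -- v i ∈ e
    by_contra hvi
    have heIio : e ⊆ (Finset.Iio i).image v := by
      intro y hy
      obtain ⟨j, hj, rfl⟩ := Finset.mem_image.1 (heS hy)
      refine Finset.mem_image.2 ⟨j, Finset.mem_Iio.2 ?_, rfl⟩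
      rcases lt_or_eq_of_le (Finset.mem_Iic.1 hj) with h | h
      · exact h
      · exact absurd (h ▸ hy) hvi
    obtain ⟨y, hy⟩ := hT.1.2 e heE heIio
    have hy' := Finset.mem_inter.1 hy
    have : y ∈ e ∩ (Tstar ∪ X).erase x := by
      refine Finset.mem_inter.2 ⟨hy'.1, Finset.mem_erase.2 ⟨?_, Finset.mem_union_left _ hy'.2⟩⟩
      rintro rfl; exact hxT hy'.2
    rw [hemp] at this; exact absurd this (Finset.notMem_empty _)
  · -- e ∩ (Tstar ∪ X) = {x}
    obtain ⟨y, hy⟩ := hTX.1.2 e heE heS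
    apply Finset.eq_singleton_iff_unique_mem.2
    constructor
    · have hy' := Finset.mem_inter.1 hy
      have hyx : y = x := by
        by_contra hne
        have : y ∈ e ∩ (Tstar ∪ X).erase x :=
          Finset.mem_inter.2 ⟨hy'.1, Finset.mem_erase.2 ⟨hne, hy'.2⟩⟩
        rw [hemp] at this; exact absurd this (Finset.notMem_empty _)
      exact hyx ▸ hy
    · intro z hz
      have hz' := Finset.mem_inter.1 hz
      by_contra hne
      have : z ∈ e ∩ (Tstar ∪ X).erase x :=
        Finset.mem_inter.2 ⟨hz'.1, Finset.mem_erase.2 ⟨hne, hz'.2⟩⟩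
      rw [hemp] at this; exact absurd this (Finset.notMem_empty _)
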